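/- Let φ be a nontrivial elliptic finite Blaschke product and let f be a function in the disk algebra A(𝔻) which is not identically zero. Then for every integer k ≥ 1, liminf_{n→∞} ( sup_{x ∈ 𝕋} ∏_{j=0}^{n−1} |f(φ^{kj}(x))| )^{1/n} > 0. -/

import Mathlib

open Filter Metric Set

noncomputable section

/-- `φ` is a finite Blaschke product with `N` factors. -/
def IsBlaschkeOf (N : ℕ) (φ : ℂ → ℂ) : Prop :=
  ∃ (u : ℂ) (a : Fin N → ℂ), ‖u‖ = 1 ∧ (∀ i, ‖a i‖ < 1) ∧
    ∀ z : ℂ, φ z = u * ∏ i, (z - a i) / (1 - (starRingEnd ℂ) (a i) * z)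

/-- `φ` is a nontrivial finite Blaschke product (at least two factors). -/
def NontrivialBlaschke (φ : ℂ → ℂ) : Prop := ∃ N : ℕ, 2 ≤ N ∧ IsBlaschkeOf N φ

/-- `φ` is elliptic: it has a fixed point in the open unit disk. -/
def Elliptic (φ : ℂ → ℂ) : Prop := ∃ z ∈ ball (0 : ℂ) 1, φ z = z

/-- `φ` is parabolic with (Denjoy–Wolff) fixed point `z₀ ∈ 𝕋`, `φ'(z₀) = 1`. -/
def ParabolicAt (φ : ℂ → ℂ) (z₀ : ℂ) : Prop :=
  z₀ ∈ sphere (0 : ℂ) 1 ∧ φ z₀ = z₀ ∧ deriv φ z₀ = 1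

def Parabolic (φ : ℂ → ℂ) : Prop := ∃ z₀ : ℂ, ParabolicAt φ z₀

/-- `φ` is hyperbolic with (Denjoy–Wolff) fixed point `z₀ ∈ 𝕋`, `0 < φ'(z₀) < 1`. -/
def HyperbolicAt (φ : ℂ → ℂ) (z₀ : ℂ) : Prop :=
  z₀ ∈ sphere (0 : ℂ) 1 ∧ φ z₀ = z₀ ∧ ∃ c : ℝ, 0 < c ∧ c < 1 ∧ deriv φ z₀ = (c : ℂ)

def Hyperbolic (φ : ℂ → ℂ) : Prop := ∃ z₀ : ℂ, HyperbolicAt φ z₀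

/-- The hyperbolic (pseudo-)distance on the unit disk. -/
def hypDist (z w : ℂ) : ℝ :=
  Real.log ((1 + ‖z - w‖ / ‖1 - (starRingEnd ℂ) z * w‖) /
    (1 - ‖z - w‖ / ‖1 - (starRingEnd ℂ) z * w‖))

/-- `φ` has zero hyperbolic step. -/
def ZeroHypStep (φ : ℂ → ℂ) : Prop :=
  ∃ z ∈ ball (0 : ℂ) 1,
    Tendsto (fun n : ℕ => hypDist (φ^[n] z) (φ^[n + 1] z)) atTop (nhds 0)

/-- `φ` has positive hyperbolic step. -/
def PosHypStep (φ : ℂ → ℂ) : Prop :=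
  ∀ z ∈ ball (0 : ℂ) 1,
    ¬ Tendsto (fun n : ℕ => hypDist (φ^[n] z) (φ^[n + 1] z)) atTop (nhds 0)

/-- `z` is a recurrent point of `φ` on the unit circle. -/
def RecurrentPt (φ : ℂ → ℂ) (z : ℂ) : Prop :=
  z ∈ sphere (0 : ℂ) 1 ∧ ∃ n : ℕ → ℕ, StrictMono n ∧ (∀ k, 0 < n k) ∧
    Tendsto (fun k => φ^[n k] z) atTop (nhds z)

/-- `f` belongs to the disk algebra `A(𝔻)`. -/
def MemDiskAlgebra (f : ℂ → ℂ) : Prop :=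
  ContinuousOn f (closedBall (0 : ℂ) 1) ∧ DifferentiableOn ℂ f (ball (0 : ℂ) 1)

/-- Normalized Lebesgue measure on the unit circle, viewed as a Borel measure on `ℂ`:
the pushforward of Lebesgue measure on `[0,1)` under `t ↦ exp(2πit)`. -/
def circleMeasure : MeasureTheory.Measure ℂ :=
  MeasureTheory.Measure.map (fun t : ℝ => Complex.exp (2 * Real.pi * Complex.I * (t : ℂ)))
    (MeasureTheory.volume.restrict (Set.Ico (0 : ℝ) 1))

section EllipticAuxLemmas

lemma ellipticAux_normSq_key (a z : ℂ) :
    Complex.normSq (1 - (starRingEnd ℂ) a * z) - Complex.normSq (z - a)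
      = (1 - Complex.normSq a) * (1 - Complex.normSq z) := by
  simp only [Complex.normSq_apply, Complex.sub_re, Complex.sub_im, Complex.mul_re, Complex.mul_im,
    Complex.one_re, Complex.one_im, Complex.conj_re, Complex.conj_im]
  ring

lemma ellipticAux_normSq_le_one {z : ℂ} (hz : ‖z‖ ≤ 1) : Complex.normSq z ≤ 1 := by
  rw [← Complex.sq_norm]
  nlinarith [norm_nonneg z]

lemma ellipticAux_normSq_lt_one {z : ℂ} (hz : ‖z‖ < 1) : Complex.normSq z < 1 := by
  rw [← Complex.sq_norm]
  nlinarith [norm_nonneg z]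

lemma ellipticAux_denom_ne_zero {a z : ℂ} (ha : ‖a‖ < 1) (hz : ‖z‖ ≤ 1) :
    1 - (starRingEnd ℂ) a * z ≠ 0 := by
  intro h
  have h1 : (starRingEnd ℂ) a * z = 1 := (sub_eq_zero.mp h).symm
  have h2 : ‖(starRingEnd ℂ) a * z‖ = 1 := by rw [h1, norm_one]
  rw [norm_mul, Complex.norm_conj] at h2
  nlinarith [norm_nonneg z, norm_nonneg a]

lemma ellipticAux_abs_factor_le {a z : ℂ} (ha : ‖a‖ < 1) (hz : ‖z‖ ≤ 1) :
    ‖z - a‖ ≤ ‖1 - (starRingEnd ℂ) a * z‖ := by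
  rw [Complex.norm_def, Complex.norm_def]
  apply Real.sqrt_le_sqrt
  nlinarith [ellipticAux_normSq_key a z, ellipticAux_normSq_le_one hz, ellipticAux_normSq_lt_one ha]

lemma ellipticAux_abs_factor_eq (a : ℂ) {z : ℂ} (hz : ‖z‖ = 1) :
    ‖z - a‖ = ‖1 - (starRingEnd ℂ) a * z‖ := by
  rw [Complex.norm_def, Complex.norm_def]
  have h1 : Complex.normSq z = 1 := by rw [← Complex.sq_norm, hz, one_pow]
  have h2 := ellipticAux_normSq_key a z
  rw [h1] at h2
  simp only [sub_self, mul_zero] at h2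
  have h3 : Complex.normSq (z - a) = Complex.normSq (1 - (starRingEnd ℂ) a * z) := by linarith
  rw [h3]

lemma ellipticAux_abs_factor_lt {a z : ℂ} (ha : ‖a‖ < 1) (hz : ‖z‖ < 1) :
    ‖z - a‖ < ‖1 - (starRingEnd ℂ) a * z‖ := by
  rw [Complex.norm_def, Complex.norm_def]
  apply Real.sqrt_lt_sqrt (Complex.normSq_nonneg _)
  nlinarith [ellipticAux_normSq_key a z, ellipticAux_normSq_lt_one hz, ellipticAux_normSq_lt_one ha]


end EllipticAuxLemmas

/-- if `φ` is a nontrivial elliptic finite Blaschke product and `f ∈ A(𝔻)`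
is not identically zero, then for every `k ≥ 1`,
`liminf_n (sup_{x ∈ 𝕋} ∏_{j<n} |f(φ^{kj}(x))|)^{1/n} > 0`. -/
theorem elliptic_liminf_pos (φ f : ℂ → ℂ) (hφ : NontrivialBlaschke φ) (hell : Elliptic φ)
    (hf : MemDiskAlgebra f) (hfne : ∃ z ∈ closedBall (0 : ℂ) 1, f z ≠ 0) :
    ∀ k : ℕ, 1 ≤ k →
      0 < Filter.liminf (fun n : ℕ =>
        (sSup ((fun x => ∏ j ∈ Finset.range n, ‖f (φ^[k * j] x)‖) ''
          sphere (0 : ℂ) 1)) ^ ((1 : ℝ) / n)) Filter.atTop := by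

  obtain ⟨N, hN, u, a, hu, ha, hφeq⟩ := hφ
  obtain ⟨z₀, hz₀m, hz₀fix⟩ := hell
  have hz₀ : ‖z₀‖ < 1 := by
    simpa using mem_ball_zero_iff.mp hz₀m
  -- basic facts about φ
  have habsφ : ∀ z : ℂ, ‖φ z‖
      = ∏ i, ‖z - a i‖ / ‖1 - (starRingEnd ℂ) (a i) * z‖ := by
    intro z
    rw [hφeq z, norm_mul, hu, one_mul, norm_prod]
    exact Finset.prod_congr rfl fun i _ => norm_div _ _
  have hφle : ∀ z : ℂ, ‖z‖ ≤ 1 → ‖φ z‖ ≤ 1 := by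
    intro z hz
    rw [habsφ z]
    refine Finset.prod_le_one
      (fun i _ => div_nonneg (norm_nonneg _) (norm_nonneg _)) (fun i _ => ?_)
    rw [div_le_one (norm_pos_iff.mpr (ellipticAux_denom_ne_zero (ha i) hz))]
    exact ellipticAux_abs_factor_le (ha i) hz
  have hφeq1 : ∀ z : ℂ, ‖z‖ = 1 → ‖φ z‖ = 1 := by
    intro z hz
    rw [habsφ z]
    refine Finset.prod_eq_one fun i _ => ?_
    rw [ellipticAux_abs_factor_eq (a i) hz]
    exact div_self (ne_of_gt (norm_pos_iff.mpr (ellipticAux_denom_ne_zero (ha i) (le_of_eq hz))))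
  have hφlt : ∀ z : ℂ, ‖z‖ < 1 → ‖φ z‖ < 1 := by
    intro z hz
    rw [habsφ z]
    have i₀ : Fin N := ⟨0, by omega⟩
    set t : Fin N → ℝ := fun i =>
      ‖z - a i‖ / ‖1 - (starRingEnd ℂ) (a i) * z‖ with ht
    have htnonneg : ∀ i, 0 ≤ t i := fun i => div_nonneg (norm_nonneg _) (norm_nonneg _)
    have htlt : t i₀ < 1 := by
      rw [ht]
      rw [div_lt_one (norm_pos_iff.mpr (ellipticAux_denom_ne_zero (ha i₀) hz.le))]
      exact ellipticAux_abs_factor_lt (ha i₀) hz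
    calc ∏ i, t i = t i₀ * ∏ i ∈ Finset.univ.erase i₀, t i :=
            (Finset.mul_prod_erase _ _ (Finset.mem_univ i₀)).symm
      _ ≤ t i₀ := mul_le_of_le_one_right (htnonneg i₀)
            (Finset.prod_le_one (fun i _ => htnonneg i) (fun i _ => by
              rw [ht]
              rw [div_le_one (norm_pos_iff.mpr (ellipticAux_denom_ne_zero (ha i) hz.le))]
              exact ellipticAux_abs_factor_le (ha i) hz.le))
      _ < 1 := htlt
  have hφdiff : ∀ z : ℂ, ‖z‖ ≤ 1 → DifferentiableAt ℂ φ z := by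
    intro z hz
    have hfun : φ = fun w => u * ∏ i, (w - a i) / (1 - (starRingEnd ℂ) (a i) * w) :=
      funext hφeq
    rw [hfun]
    refine DifferentiableAt.const_mul ?_ u
    refine DifferentiableAt.fun_finsetProd fun i _ => ?_
    exact (differentiableAt_id.sub (differentiableAt_const _)).div
      ((differentiableAt_const _).sub ((differentiableAt_const _).mul differentiableAt_id))
      (ellipticAux_denom_ne_zero (ha i) hz)
  -- iterates
  have hiter_le : ∀ (m : ℕ) (z : ℂ), ‖z‖ ≤ 1 → ‖φ^[m] z‖ ≤ 1 := by
    intro m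
    induction m with
    | zero => intro z hz; simpa using hz
    | succ m ih =>
        intro z hz
        rw [Function.iterate_succ_apply']
        exact hφle _ (ih z hz)
  have hiter_eq : ∀ (m : ℕ) (z : ℂ), ‖z‖ = 1 → ‖φ^[m] z‖ = 1 := by
    intro m
    induction m with
    | zero => intro z hz; simpa using hz
    | succ m ih =>
        intro z hz
        rw [Function.iterate_succ_apply']
        exact hφeq1 _ (ih z hz)
  have hiter_lt : ∀ (m : ℕ) (z : ℂ), ‖z‖ < 1 → ‖φ^[m] z‖ < 1 := by
    intro m
    induction m with
    | zero => intro z hz; simpa using hz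
    | succ m ih =>
        intro z hz
        rw [Function.iterate_succ_apply']
        exact hφlt _ (ih z hz)
  have hiter_diff : ∀ (m : ℕ) (z : ℂ), ‖z‖ ≤ 1 → DifferentiableAt ℂ (φ^[m]) z := by
    intro m
    induction m with
    | zero => intro z hz; simpa [Function.iterate_zero] using differentiableAt_id'
    | succ m ih =>
        intro z hz
        rw [Function.iterate_succ']
        exact DifferentiableAt.comp z (hφdiff _ (hiter_le m z hz)) (ih z hz)
  have hiter_contOn : ∀ m : ℕ, ContinuousOn (φ^[m]) (closedBall (0 : ℂ) 1) := by
    intro m z hz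
    have hz' : ‖z‖ ≤ 1 := by
      simpa using mem_closedBall_zero_iff.mp hz
    exact (hiter_diff m z hz').continuousAt.continuousWithinAt
  -- f is not identically zero on the open ball
  have hfball : ∃ z₁ ∈ ball (0 : ℂ) 1, f z₁ ≠ 0 := by
    by_contra h
    push_neg at h
    obtain ⟨z, hzm, hzn⟩ := hfne
    have hcl : z ∈ closure (ball (0 : ℂ) 1) := by
      rw [closure_ball (0 : ℂ) one_ne_zero]; exact hzm
    have hnb : (nhdsWithin z (ball (0 : ℂ) 1)).NeBot := mem_closure_iff_nhdsWithin_neBot.mp hcl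
    have h1 : Tendsto f (nhdsWithin z (ball (0 : ℂ) 1)) (nhds (f z)) :=
      ((hf.1 z hzm).mono ball_subset_closedBall).tendsto
    have h2 : Tendsto f (nhdsWithin z (ball (0 : ℂ) 1)) (nhds 0) := by
      refine Tendsto.congr' ?_ tendsto_const_nhds
      exact eventually_nhdsWithin_of_forall fun w hw => (h w hw).symm
    exact hzn (tendsto_nhds_unique h1 h2)
  obtain ⟨z₁, hz₁m, hz₁⟩ := hfball
  have hfan : AnalyticOnNhd ℂ f (ball (0 : ℂ) 1) := hf.2.analyticOnNhd isOpen_ball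
  have hA : AnalyticAt ℂ f z₀ := hfan z₀ hz₀m
  have hnotev : ¬ ∀ᶠ w in nhds z₀, f w = 0 := by
    intro hev
    have heq : EqOn f 0 (ball (0 : ℂ) 1) :=
      hfan.eqOn_zero_of_preconnected_of_eventuallyEq_zero
        (convex_ball (0 : ℂ) 1).isPreconnected hz₀m hev
    exact hz₁ (heq hz₁m)
  have hord : analyticOrderAt f z₀ ≠ ⊤ := fun h => hnotev (analyticOrderAt_eq_top.mp h)
  set s : ℕ := (analyticOrderAt f z₀).toNat with hs
  obtain ⟨g₀, hg₀an, hg₀ne, hfac⟩ := (hA.analyticOrderAt_eq_natCast (n := s)).mp ((ENat.coe_toNat hord).symm)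
  -- the function g
  set g : ℂ → ℂ := fun w => if w = z₀ then g₀ z₀ else f w / (w - z₀) ^ s with hgdef
  have hgz₀ : g z₀ = g₀ z₀ := if_pos rfl
  have hgz₀ne : g z₀ ≠ 0 := by rw [hgz₀]; exact hg₀ne
  have hgev : g =ᶠ[nhds z₀] g₀ := by
    filter_upwards [hfac] with w hw
    by_cases hwz : w = z₀
    · rw [hwz, hgz₀]
    · have hpow : (w - z₀) ^ s ≠ 0 := pow_ne_zero _ (sub_ne_zero.mpr hwz)
      simp only [hgdef, if_neg hwz]
      rw [hw, smul_eq_mul]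
      field_simp
  have hgan : AnalyticAt ℂ g z₀ := hg₀an.congr hgev.symm
  have hfg : ∀ w : ℂ, w ≠ z₀ → f w = (w - z₀) ^ s * g w := by
    intro w hw
    simp only [hgdef, if_neg hw]
    have hpow : (w - z₀) ^ s ≠ 0 := pow_ne_zero _ (sub_ne_zero.mpr hw)
    field_simp
  have hgcont : ContinuousOn g (closedBall (0 : ℂ) 1) := by
    intro w hw
    by_cases hwz : w = z₀
    · subst hwz; exact hgan.continuousAt.continuousWithinAt
    · have hev : ∀ᶠ v in nhds w, v ≠ z₀ := eventually_ne_nhds hwz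
      have hloc : g =ᶠ[nhdsWithin w (closedBall (0 : ℂ) 1)]
          fun v => f v / (v - z₀) ^ s := by
        refine (hev.filter_mono nhdsWithin_le_nhds).mono fun v hv => ?_
        simp only [hgdef, if_neg hv]
      refine ContinuousWithinAt.congr_of_eventuallyEq ?_ hloc (by simp only [hgdef, if_neg hwz])
      exact (hf.1 w hw).div
        (((continuous_id.sub continuous_const).pow s).continuousWithinAt)
        (pow_ne_zero _ (sub_ne_zero.mpr hwz))
  have hgdiff : ∀ w : ℂ, ‖w‖ < 1 → DifferentiableAt ℂ g w := by
    intro w hw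
    by_cases hwz : w = z₀
    · subst hwz; exact hgan.differentiableAt
    · have hbm : w ∈ ball (0 : ℂ) 1 := by
        rw [mem_ball_zero_iff]; simpa using hw
      have hbase : DifferentiableAt ℂ (fun v => f v / (v - z₀) ^ s) w :=
        (hf.2.differentiableAt (isOpen_ball.mem_nhds hbm)).div
          ((differentiableAt_id.sub (differentiableAt_const _)).pow _)
          (pow_ne_zero _ (sub_ne_zero.mpr hwz))
      refine hbase.congr_of_eventuallyEq ?_
      exact (eventually_ne_nhds hwz).mono fun v hv => by simp only [hgdef, if_neg hv]
  -- main estimates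
  intro k hk
  set H : ℕ → ℂ → ℂ := fun n w => ∏ j ∈ Finset.range n, g (φ^[k * j] w) with hH
  have habs_le : ∀ w : ℂ, w ∈ closedBall (0 : ℂ) 1 → ‖w‖ ≤ 1 := by
    intro w hw
    simpa using mem_closedBall_zero_iff.mp hw
  have habs_eq : ∀ w : ℂ, w ∈ sphere (0 : ℂ) 1 → ‖w‖ = 1 := by
    intro w hw
    simpa using mem_sphere_zero_iff_norm.mp hw
  have hHcontOn : ∀ n, ContinuousOn (H n) (closedBall (0 : ℂ) 1) := by
    intro n
    refine continuousOn_finset_prod _ fun j _ => ?_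
    refine hgcont.comp (hiter_contOn (k * j)) ?_
    intro w hw
    rw [mem_closedBall_zero_iff]
    simpa using hiter_le (k * j) w (habs_le w hw)
  have hHdcc : ∀ n, DiffContOnCl ℂ (H n) (ball (0 : ℂ) 1) := by
    intro n
    constructor
    · intro w hw
      have hw' : ‖w‖ < 1 := by
        simpa using mem_ball_zero_iff.mp hw
      refine (DifferentiableAt.fun_finsetProd fun j _ => ?_).differentiableWithinAt
      have := DifferentiableAt.comp w (hgdiff _ (hiter_lt (k * j) w hw')) (hiter_diff (k * j) w hw'.le)
      exact this
    · rw [closure_ball (0 : ℂ) one_ne_zero]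
      exact hHcontOn n
  have hHz₀ : ∀ n, H n z₀ = g z₀ ^ n := by
    intro n
    have hfix : ∀ j : ℕ, φ^[k * j] z₀ = z₀ := fun j => Function.iterate_fixed hz₀fix _
    simp [hH, hfix, Finset.prod_const, Finset.card_range, hgz₀]
  set δ : ℝ := 1 - ‖z₀‖ with hδdef
  have hδ : 0 < δ := by simp only [hδdef]; linarith
  set c : ℝ := δ ^ s * ‖g z₀‖ with hcdef
  have hc : 0 < c := mul_pos (pow_pos hδ s) (norm_pos_iff.mpr hgz₀ne)
  -- bound M
  obtain ⟨C, hC⟩ := (isCompact_closedBall (0 : ℂ) 1).exists_bound_of_continuousOn hf.1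
  set M : ℝ := max C 1 with hMdef
  have hM1 : (1 : ℝ) ≤ M := le_max_right _ _
  have hMb : ∀ w : ℂ, ‖w‖ ≤ 1 → ‖f w‖ ≤ M := by
    intro w hw
    have hwm : w ∈ closedBall (0 : ℂ) 1 := by
      rw [mem_closedBall_zero_iff]; simpa using hw
    calc ‖f w‖ = ‖f w‖ := rfl
      _ ≤ C := hC w hwm
      _ ≤ M := le_max_left _ _
  -- continuity of the F n on the sphere
  have hFcont : ∀ n, ContinuousOn
      (fun x => ∏ j ∈ Finset.range n, ‖f (φ^[k * j] x)‖) (sphere (0 : ℂ) 1) := by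
    intro n
    refine continuousOn_finset_prod _ fun j _ => ?_
    refine continuous_norm.comp_continuousOn ?_
    refine hf.1.comp ((hiter_contOn (k * j)).mono sphere_subset_closedBall) ?_
    intro w hw
    rw [mem_closedBall_zero_iff]
    simpa using hiter_le (k * j) w (habs_le w (sphere_subset_closedBall hw))
  have hsphne : ((1 : ℂ)) ∈ sphere (0 : ℂ) 1 := by simp
  have hbdd : ∀ n, BddAbove
      ((fun x => ∏ j ∈ Finset.range n, ‖f (φ^[k * j] x)‖) '' sphere (0 : ℂ) 1) :=
    fun n => ((isCompact_sphere (0 : ℂ) 1).image_of_continuousOn (hFcont n)).bddAbove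
  -- key lower bound
  have key : ∀ n : ℕ, c ^ n ≤
      sSup ((fun x => ∏ j ∈ Finset.range n, ‖f (φ^[k * j] x)‖) '' sphere (0 : ℂ) 1) := by
    intro n
    -- maximum of |H n| on the sphere
    obtain ⟨x', hx'm, hx'max⟩ := (isCompact_sphere (0 : ℂ) 1).exists_isMaxOn ⟨1, hsphne⟩
      (continuous_norm.comp_continuousOn ((hHcontOn n).mono sphere_subset_closedBall))
    -- maximum modulus principle
    have hmm : ‖H n z₀‖ ≤ ‖H n x'‖ := by
      have hfr : ∀ w ∈ frontier (ball (0 : ℂ) 1), ‖H n w‖ ≤ ‖H n x'‖ := by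
        intro w hw
        rw [frontier_ball (0 : ℂ) one_ne_zero] at hw
        simpa using hx'max hw
      have hcl : z₀ ∈ closure (ball (0 : ℂ) 1) := by
        rw [closure_ball (0 : ℂ) one_ne_zero]; exact ball_subset_closedBall hz₀m
      have := Complex.norm_le_of_forall_mem_frontier_norm_le isBounded_ball (hHdcc n) hfr hcl
      simpa using this
    -- pointwise comparison on the sphere
    have horb : ∀ j : ℕ, ‖φ^[k * j] x'‖ = 1 :=
      fun j => hiter_eq (k * j) x' (habs_eq x' hx'm)
    have hFH : δ ^ (s * n) * ‖H n x'‖ ≤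
        ∏ j ∈ Finset.range n, ‖f (φ^[k * j] x')‖ := by
      have habsH : ‖H n x'‖ = ∏ j ∈ Finset.range n, ‖g (φ^[k * j] x')‖ :=
        norm_prod _ _
      rw [habsH]
      have hrw : δ ^ (s * n) * ∏ j ∈ Finset.range n, ‖g (φ^[k * j] x')‖
          = ∏ j ∈ Finset.range n, (δ ^ s * ‖g (φ^[k * j] x')‖) := by
        rw [Finset.prod_mul_distrib, Finset.prod_const, Finset.card_range, ← pow_mul]
      rw [hrw]
      refine Finset.prod_le_prod (fun j _ => mul_nonneg (pow_nonneg hδ.le _) (norm_nonneg _))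
        (fun j _ => ?_)
      set y : ℂ := φ^[k * j] x' with hy
      have hyabs : ‖y‖ = 1 := horb j
      have hyne : y ≠ z₀ := by
        intro hcon
        rw [hcon] at hyabs
        exact absurd hyabs (ne_of_lt hz₀)
      have hfy : ‖f y‖ = ‖y - z₀‖ ^ s * ‖g y‖ := by
        rw [hfg y hyne, norm_mul, norm_pow]
      rw [hfy]
      refine mul_le_mul_of_nonneg_right ?_ (norm_nonneg _)
      refine pow_le_pow_left₀ hδ.le ?_ s
      calc δ = ‖y‖ - ‖z₀‖ := by rw [hyabs]
        _ ≤ ‖y - z₀‖ := by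
            have := norm_sub_norm_le y z₀
            simpa using this
    -- combine
    calc c ^ n = δ ^ (s * n) * ‖g z₀‖ ^ n := by
          rw [hcdef, mul_pow, ← pow_mul]
      _ = δ ^ (s * n) * ‖H n z₀‖ := by rw [hHz₀ n, norm_pow]
      _ ≤ δ ^ (s * n) * ‖H n x'‖ :=
          mul_le_mul_of_nonneg_left hmm (pow_nonneg hδ.le _)
      _ ≤ ∏ j ∈ Finset.range n, ‖f (φ^[k * j] x')‖ := hFH
      _ ≤ sSup _ := le_csSup (hbdd n) (mem_image_of_mem _ hx'm)
  -- upper bound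
  have keyM : ∀ n : ℕ,
      sSup ((fun x => ∏ j ∈ Finset.range n, ‖f (φ^[k * j] x)‖) '' sphere (0 : ℂ) 1)
        ≤ M ^ n := by
    intro n
    refine Real.sSup_le ?_ (pow_nonneg (le_trans zero_le_one hM1) n)
    rintro b ⟨x, hx, rfl⟩
    calc ∏ j ∈ Finset.range n, ‖f (φ^[k * j] x)‖
        ≤ ∏ _j ∈ Finset.range n, M := by
          refine Finset.prod_le_prod (fun j _ => norm_nonneg _) (fun j _ => ?_)
          exact hMb _ (hiter_le (k * j) x (habs_eq x hx).le)
      _ = M ^ n := by rw [Finset.prod_const, Finset.card_range]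
  -- conclude about the liminf
  have hup : ∀ n : ℕ, (sSup ((fun x => ∏ j ∈ Finset.range n, ‖f (φ^[k * j] x)‖) ''
      sphere (0 : ℂ) 1)) ^ ((1 : ℝ) / n) ≤ M := by
    intro n
    rcases Nat.eq_zero_or_pos n with hn | hn
    · subst hn
      simp only [Nat.cast_zero, div_zero, Real.rpow_zero]
      exact hM1
    · have hnne : (n : ℝ) ≠ 0 := Nat.cast_ne_zero.mpr hn.ne'
      have h0 : (0 : ℝ) ≤ sSup ((fun x => ∏ j ∈ Finset.range n, ‖f (φ^[k * j] x)‖) ''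
          sphere (0 : ℂ) 1) := le_trans (pow_pos hc n).le (key n)
      calc (sSup _) ^ ((1 : ℝ) / n) ≤ (M ^ n) ^ ((1 : ℝ) / n) :=
            Real.rpow_le_rpow h0 (keyM n) (by positivity)
        _ = M := by
            rw [← Real.rpow_natCast M n, ← Real.rpow_mul (le_trans zero_le_one hM1)]
            rw [mul_one_div_cancel hnne, Real.rpow_one]
  have hlow : ∀ n : ℕ, 1 ≤ n → c ≤ (sSup ((fun x => ∏ j ∈ Finset.range n,
      ‖f (φ^[k * j] x)‖) '' sphere (0 : ℂ) 1)) ^ ((1 : ℝ) / n) := by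
    intro n hn
    have hnne : (n : ℝ) ≠ 0 := Nat.cast_ne_zero.mpr (by omega)
    calc c = (c ^ n) ^ ((1 : ℝ) / n) := by
          rw [← Real.rpow_natCast c n, ← Real.rpow_mul hc.le]
          rw [mul_one_div_cancel hnne, Real.rpow_one]
      _ ≤ _ := Real.rpow_le_rpow (pow_pos hc n).le (key n) (by positivity)
  refine lt_of_lt_of_le hc (Filter.le_liminf_of_le ?_ ?_)
  · refine Filter.IsBoundedUnder.isCoboundedUnder_ge ?_
    exact Filter.isBoundedUnder_of ⟨M, fun n => hup n⟩
  · filter_upwards [Filter.eventually_ge_atTop 1] with n hn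
    exact hlow n hn
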